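/- Non-existence in dimension n ≥ 5. For every n ≥ 5 there exists a smooth Weyl candidate W_{abcd} on flat ℝⁿ (for any chosen signature of the constant metric η) such that no four times continuously differentiable tensor field L_{abc} with L_{abc} = L_{[ab]c} satisfies equation (4); i.e., a Lanczos potential for Weyl candidates does not generally exist in flat space of dimension at least five. -/

import Mathlib

open scoped ContDiff

noncomputable section

/-- Partial derivative `∂ᵢ f` of a scalar field on flat `ℝⁿ` (points represented as
`Fin n → ℝ`, standard coordinates) in the `i`-th coordinate direction.  In Cartesian
coordinates on flat space this is the covariant derivative `;i`. -/
def pd {n : ℕ} (i : Fin n) (f : (Fin n → ℝ) → ℝ) : (Fin n → ℝ) → ℝ :=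
  fun x => fderiv ℝ f x (Pi.single i 1)

/-- Components `η_{ab}` of the constant diagonal metric with diagonal entries `η a = ±1`;
since the entries are `±1` these coincide with the components `η^{ab}` of the inverse
metric. -/
def gm {n : ℕ} (η : Fin n → ℝ) (a b : Fin n) : ℝ := if a = b then η a else 0

/-- Antisymmetrization over two index slots. -/
def asym2 {n : ℕ} (T : Fin n → Fin n → ℝ) (a b : Fin n) : ℝ := (T a b - T b a) / 2

/-- Antisymmetrization over three index slots. -/
def asym3 {n : ℕ} (T : Fin n → Fin n → Fin n → ℝ) (a b c : Fin n) : ℝ :=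
  (T a b c - T a c b - T b a c + T b c a + T c a b - T c b a) / 6

/-- Simultaneous antisymmetrization over a pair of upper slots and a pair of lower slots. -/
def asym22 {n : ℕ} (T : Fin n → Fin n → Fin n → Fin n → ℝ) (a b c d : Fin n) : ℝ :=
  (T a b c d - T b a c d - T a b d c + T b a d c) / 4

/-- Simultaneous antisymmetrization over a triple of upper slots and a triple of lower
slots (arguments ordered as `T upper₁ upper₂ upper₃ lower₁ lower₂ lower₃`). -/
def asym33 {n : ℕ} (T : Fin n → Fin n → Fin n → Fin n → Fin n → Fin n → ℝ)
    (a b f c d e : Fin n) : ℝ :=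
  asym3 (fun a b f => asym3 (fun c d e => T a b f c d e) c d e) a b f

/-- A Weyl candidate: a 4-tensor field with the index symmetries (3a)–(3d):
antisymmetry in the first and in the second index pair, symmetry under interchange of the
two pairs, vanishing cyclic sum `W_{a[bcd]} = 0`, and vanishing trace `W^a{}_{bad} = 0`
(the trace being taken with the metric `η`). -/
def WeylCandidate {n : ℕ} (η : Fin n → ℝ)
    (W : (Fin n → ℝ) → Fin n → Fin n → Fin n → Fin n → ℝ) : Prop :=
  (∀ x a b c d, W x a b c d = - W x b a c d) ∧
  (∀ x a b c d, W x a b c d = - W x a b d c) ∧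
  (∀ x a b c d, W x a b c d = W x c d a b) ∧
  (∀ x a b c d, asym3 (fun b c d => W x a b c d) b c d = 0) ∧
  (∀ x b d, ∑ a, η a * W x a b a d = 0)

/-- The right-hand side of the Lanczos potential equation (4), in the equivalent fully
lowered form (the free indices `a b`, raised in the paper, are lowered with the invertible
diagonal metric `η`, which only multiplies each component equation by `η a * η b ≠ 0`).
Each contracted (dummy) index pair carries a factor `η i` coming from the inverse
metric. -/
def rhs4 {n : ℕ} (η : Fin n → ℝ) (L : (Fin n → ℝ) → Fin n → Fin n → Fin n → ℝ)
    (x : Fin n → ℝ) (a b c d : Fin n) : ℝ :=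
  -- 2 L^{ab}{}_{[c;d]}
  (pd d (L · a b c) x - pd c (L · a b d) x)
  -- + 2 L_{cd}{}^{[a;b]}
  + (pd b (L · c d a) x - pd a (L · c d b) x)
  -- − (4/(n−2)) δ^{[a}_{[c} ( L^{b]i}{}_{d];i} − L^{b]i}{}_{|i|;d]} + L_{d]i}{}^{b];i} − L_{d]i}{}^{|i|;b]} )
  - (4 / ((n : ℝ) - 2)) *
      asym22 (fun a b c d =>
        gm η a c *
          ∑ i, η i *
            (pd i (L · b i d) x - pd d (L · b i i) x
              + pd i (L · d i b) x - pd b (L · d i i) x)) a b c d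
  -- + (8/((n−2)(n−1))) δ^{a}_{[c} δ^{b}_{d]} L^{ij}{}_{i;j}
  + (8 / (((n : ℝ) - 2) * ((n : ℝ) - 1))) *
      ((gm η a c * gm η b d - gm η a d * gm η b c) / 2) *
      ∑ i, ∑ j, η i * η j * pd j (L · i j i) x

/-- Equation (4): `L` is a Lanczos potential for `W` (fully lowered, equivalent form). -/
def Eq4 {n : ℕ} (η : Fin n → ℝ)
    (W : (Fin n → ℝ) → Fin n → Fin n → Fin n → Fin n → ℝ)
    (L : (Fin n → ℝ) → Fin n → Fin n → Fin n → ℝ) : Prop :=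
  ∀ x a b c d, W x a b c d = rhs4 η L x a b c d

/-- The right-hand side of equation (5) (equation (4) in the Lanczos algebraic gauge
`L_{ab}{}^b = 0`), fully lowered form:
`2 L^{ab}{}_{[c;d]} + 2 L_{cd}{}^{[a;b]} − (4/(n−2)) δ^{[a}_{[c} ( L^{b]i}{}_{d];i} + L_{d]i}{}^{b];i} )`. -/
def rhs5 {n : ℕ} (η : Fin n → ℝ) (L : (Fin n → ℝ) → Fin n → Fin n → Fin n → ℝ)
    (x : Fin n → ℝ) (a b c d : Fin n) : ℝ :=
  (pd d (L · a b c) x - pd c (L · a b d) x)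
  + (pd b (L · c d a) x - pd a (L · c d b) x)
  - (4 / ((n : ℝ) - 2)) *
      asym22 (fun a b c d =>
        gm η a c * ∑ i, η i * (pd i (L · b i d) x + pd i (L · d i b) x)) a b c d

/-- Equation (5). -/
def Eq5 {n : ℕ} (η : Fin n → ℝ)
    (W : (Fin n → ℝ) → Fin n → Fin n → Fin n → Fin n → ℝ)
    (L : (Fin n → ℝ) → Fin n → Fin n → Fin n → ℝ) : Prop :=
  ∀ x a b c d, W x a b c d = rhs5 η L x a b c d

/-- Constraint (8), fully lowered form:
`W^{[ab}{}_{[cd;e]}{}^{f]} = (1/(n−4)) δ^{[a}_{[c} W^{bf]}{}_{de];i}{}^{i}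
 + (2/(n−4)) δ^{[a}_{[c} W^{|i|b}{}_{de];i}{}^{f]} + (2/(n−4)) δ^{[a}_{[c} W^{bf]}{}_{|i|d;e]}{}^{i}
 + (4/((n−3)(n−4))) δ^{[a}_{[c} δ^{b}_{d} W^{f]i}{}_{e]j;i}{}^{j}`. -/
def Constraint8 {n : ℕ} (η : Fin n → ℝ)
    (W : (Fin n → ℝ) → Fin n → Fin n → Fin n → Fin n → ℝ) : Prop :=
  ∀ x a b f c d e,
    asym33 (fun a b f c d e => pd f (pd e (W · a b c d)) x) a b f c d e =
      (1 / ((n : ℝ) - 4)) *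
          asym33 (fun a b f c d e =>
            gm η a c * ∑ i, η i * pd i (pd i (W · b f d e)) x) a b f c d e
      + (2 / ((n : ℝ) - 4)) *
          asym33 (fun a b f c d e =>
            gm η a c * ∑ i, η i * pd f (pd i (W · i b d e)) x) a b f c d e
      + (2 / ((n : ℝ) - 4)) *
          asym33 (fun a b f c d e =>
            gm η a c * ∑ i, η i * pd i (pd e (W · b f i d)) x) a b f c d e
      + (4 / (((n : ℝ) - 3) * ((n : ℝ) - 4))) *
          asym33 (fun a b f c d e =>
            gm η a c * gm η b d *
              ∑ i, ∑ j, η i * η j * pd j (pd i (W · f i e j)) x) a b f c d e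

/-- Constraint (10), fully lowered form:
`W^{[ab}{}_{cd;i}{}^{|i|e]} + 2 W^{[ab}{}_{i[c;d]}{}^{|i|e]}
 + (4/(n−3)) δ^{[a}_{[c} W^{b|i}{}_{d]j;i}{}^{j|e]} = 0`,
antisymmetrized over the upper indices `a b e` and (where indicated) the lower indices
`c d`. -/
def Constraint10 {n : ℕ} (η : Fin n → ℝ)
    (W : (Fin n → ℝ) → Fin n → Fin n → Fin n → Fin n → ℝ) : Prop :=
  ∀ x a b e c d,
    asym3 (fun a b e =>
      (∑ i, η i * pd e (pd i (pd i (W · a b c d))) x)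
      + 2 * asym2 (fun c d =>
            ∑ i, η i * pd e (pd i (pd d (W · a b i c))) x) c d
      + (4 / ((n : ℝ) - 3)) * asym2 (fun c d =>
            gm η a c *
              ∑ i, ∑ j, η i * η j * pd e (pd j (pd i (W · b i d j))) x) c d) a b e
    = 0


namespace LanAux
variable {n : ℕ}

theorem contDiff_pd {m : ℕ∞} {f : (Fin n → ℝ) → ℝ} (hf : ContDiff ℝ (m + 1) f) (i : Fin n) :
    ContDiff ℝ m (pd i f) :=
  (hf.fderiv_right (m := m) le_rfl).clm_apply contDiff_const

theorem pd_comm {f : (Fin n → ℝ) → ℝ} (hf : ContDiff ℝ 2 f) (i j : Fin n) :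
    pd i (pd j f) = pd j (pd i f) := by
  funext x
  have hd : Differentiable ℝ f := hf.differentiable (by norm_num)
  have hd2 : Differentiable ℝ (fderiv ℝ f) :=
    (hf.fderiv_right (m := 1) (by norm_num)).differentiable (by norm_num)
  have key : ∀ v w : Fin n → ℝ,
      fderiv ℝ (fun y => fderiv ℝ f y v) x w = fderiv ℝ (fderiv ℝ f) x w v := by
    intro v w
    have h2 : (fun y => fderiv ℝ f y v)
        = fun y => (ContinuousLinearMap.apply ℝ ℝ v) (fderiv ℝ f y) := rfl
    rw [h2, fderiv_comp' x ((ContinuousLinearMap.apply ℝ ℝ v).differentiableAt) (hd2 x)]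
    simp
  have sym := second_derivative_symmetric (f' := fderiv ℝ f)
      (fun y => (hd y).hasFDerivAt) ((hd2 x).hasFDerivAt)
      (Pi.single i 1) (Pi.single j 1)
  have e1 : pd i (pd j f) x = fderiv ℝ (fderiv ℝ f) x (Pi.single i 1) (Pi.single j 1) :=
    key (Pi.single j 1) (Pi.single i 1)
  have e2 : pd j (pd i f) x = fderiv ℝ (fderiv ℝ f) x (Pi.single j 1) (Pi.single i 1) :=
    key (Pi.single i 1) (Pi.single j 1)
  rw [e1, e2, sym]

theorem pd_neg {f : (Fin n → ℝ) → ℝ} (i : Fin n) :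
    pd i (fun x => -f x) = fun x => -pd i f x := by
  funext x; simp [pd]

theorem pd_cmul (c : ℝ) {f : (Fin n → ℝ) → ℝ} (hf : Differentiable ℝ f)
    (i : Fin n) : pd i (fun x => c * f x) = fun x => c * pd i f x := by
  funext x; simp [pd, fderiv_const_mul (hf x) c]

theorem pd_sum {ι : Type*} (s : Finset ι) {F : ι → (Fin n → ℝ) → ℝ}
    (hF : ∀ k ∈ s, Differentiable ℝ (F k)) (i : Fin n) :
    pd i (fun x => ∑ k ∈ s, F k x) = fun x => ∑ k ∈ s, pd i (F k) x := by
  funext x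
  simp only [pd]
  rw [fderiv_fun_sum (fun k hk => (hF k hk x))]
  simp

theorem pd_comb4 {A B C D : (Fin n → ℝ) → ℝ} (hA : Differentiable ℝ A)
    (hB : Differentiable ℝ B) (hC : Differentiable ℝ C) (hD : Differentiable ℝ D) (r : Fin n) :
    pd r (fun x => A x - B x + C x - D x)
      = fun x => pd r A x - pd r B x + pd r C x - pd r D x := by
  funext x
  have h := ((((hA x).hasFDerivAt.fun_sub (hB x).hasFDerivAt).fun_add
      (hC x).hasFDerivAt).fun_sub (hD x).hasFDerivAt).fderiv
  simp only [pd, h]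
  simp

theorem pd_comb6 {A B C D S1 S2 : (Fin n → ℝ) → ℝ} (κ c1 c2 : ℝ) (hA : Differentiable ℝ A)
    (hB : Differentiable ℝ B) (hC : Differentiable ℝ C) (hD : Differentiable ℝ D)
    (hS1 : Differentiable ℝ S1) (hS2 : Differentiable ℝ S2) (r : Fin n) :
    pd r (fun x => A x - B x + C x - D x - κ * (c1 * S1 x - c2 * S2 x))
      = fun x => pd r A x - pd r B x + pd r C x - pd r D x
          - κ * (c1 * pd r S1 x - c2 * pd r S2 x) := by
  funext x
  have h := (((((hA x).hasFDerivAt.fun_sub (hB x).hasFDerivAt).fun_add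
      (hC x).hasFDerivAt).fun_sub (hD x).hasFDerivAt).fun_sub
      ((((hS1 x).hasFDerivAt.const_mul c1).fun_sub
        ((hS2 x).hasFDerivAt.const_mul c2)).const_mul κ)).fderiv
  simp only [pd, h]
  simp

end LanAux

namespace LanAux
variable {n : ℕ}

theorem c3d {f : (Fin n → ℝ) → ℝ} (hf : ContDiff ℝ 3 f) : Differentiable ℝ f :=
  hf.differentiable (by norm_num)

theorem c3pd {f : (Fin n → ℝ) → ℝ} (hf : ContDiff ℝ 3 f) (i : Fin n) :
    ContDiff ℝ 2 (pd i f) := contDiff_pd (m := 2) (by exact_mod_cast hf) i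

theorem c2pd {f : (Fin n → ℝ) → ℝ} (hf : ContDiff ℝ 2 f) (i : Fin n) :
    ContDiff ℝ 1 (pd i f) := contDiff_pd (m := 1) (by exact_mod_cast hf) i

theorem c2d {f : (Fin n → ℝ) → ℝ} (hf : ContDiff ℝ 2 f) : Differentiable ℝ f :=
  hf.differentiable (by norm_num)

theorem c1d {f : (Fin n → ℝ) → ℝ} (hf : ContDiff ℝ 1 f) : Differentiable ℝ f :=
  hf.differentiable (by norm_num)

theorem pd3_comb4 {A B C D : (Fin n → ℝ) → ℝ} (hA : ContDiff ℝ 3 A)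
    (hB : ContDiff ℝ 3 B) (hC : ContDiff ℝ 3 C) (hD : ContDiff ℝ 3 D) (p q r : Fin n) :
    pd p (pd q (pd r (fun x => A x - B x + C x - D x)))
      = fun x => pd p (pd q (pd r A)) x - pd p (pd q (pd r B)) x
          + pd p (pd q (pd r C)) x - pd p (pd q (pd r D)) x := by
  rw [pd_comb4 (c3d hA) (c3d hB) (c3d hC) (c3d hD) r]
  rw [pd_comb4 (c2d (c3pd hA r)) (c2d (c3pd hB r)) (c2d (c3pd hC r)) (c2d (c3pd hD r)) q]
  rw [pd_comb4 (c1d (c2pd (c3pd hA r) q)) (c1d (c2pd (c3pd hB r) q))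
      (c1d (c2pd (c3pd hC r) q)) (c1d (c2pd (c3pd hD r) q)) p]

theorem pd3_comb6 {A B C D S1 S2 : (Fin n → ℝ) → ℝ} (κ c1 c2 : ℝ) (hA : ContDiff ℝ 3 A)
    (hB : ContDiff ℝ 3 B) (hC : ContDiff ℝ 3 C) (hD : ContDiff ℝ 3 D)
    (hS1 : ContDiff ℝ 3 S1) (hS2 : ContDiff ℝ 3 S2) (p q r : Fin n) :
    pd p (pd q (pd r (fun x => A x - B x + C x - D x - κ * (c1 * S1 x - c2 * S2 x))))
      = fun x => pd p (pd q (pd r A)) x - pd p (pd q (pd r B)) x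
          + pd p (pd q (pd r C)) x - pd p (pd q (pd r D)) x
          - κ * (c1 * pd p (pd q (pd r S1)) x - c2 * pd p (pd q (pd r S2)) x) := by
  rw [pd_comb6 κ c1 c2 (c3d hA) (c3d hB) (c3d hC) (c3d hD) (c3d hS1) (c3d hS2) r]
  rw [pd_comb6 κ c1 c2 (c2d (c3pd hA r)) (c2d (c3pd hB r)) (c2d (c3pd hC r))
      (c2d (c3pd hD r)) (c2d (c3pd hS1 r)) (c2d (c3pd hS2 r)) q]
  rw [pd_comb6 κ c1 c2 (c1d (c2pd (c3pd hA r) q)) (c1d (c2pd (c3pd hB r) q))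
      (c1d (c2pd (c3pd hC r) q)) (c1d (c2pd (c3pd hD r) q)) (c1d (c2pd (c3pd hS1 r) q))
      (c1d (c2pd (c3pd hS2 r) q)) p]

theorem pd3_cmul (c : ℝ) {F : (Fin n → ℝ) → ℝ} (hF : ContDiff ℝ 3 F) (p q r : Fin n) :
    pd p (pd q (pd r (fun x => c * F x)))
      = fun x => c * pd p (pd q (pd r F)) x := by
  rw [pd_cmul c (c3d hF) r, pd_cmul c (c2d (c3pd hF r)) q,
    pd_cmul c (c1d (c2pd (c3pd hF r) q)) p]

theorem pd3_sum {ι : Type*} (s : Finset ι) {F : ι → (Fin n → ℝ) → ℝ}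
    (hF : ∀ k, ContDiff ℝ 3 (F k)) (p q r : Fin n) :
    pd p (pd q (pd r (fun x => ∑ k ∈ s, F k x)))
      = fun x => ∑ k ∈ s, pd p (pd q (pd r (F k))) x := by
  rw [pd_sum s (fun k _ => c3d (hF k)) r, pd_sum s (fun k _ => c2d (c3pd (hF k) r)) q,
    pd_sum s (fun k _ => c1d (c2pd (c3pd (hF k) r) q)) p]

end LanAux

namespace LanAux
variable {n : ℕ}

def dl (a u : Fin n) : ℝ := if a = u then 1 else 0

def eE (u v a b : Fin n) : ℝ := dl a u * dl b v - dl a v * dl b u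

def KK (u v w z a b c d : Fin n) : ℝ :=
  eE u v a b * eE w z c d + eE w z a b * eE u v c d
    + eE u w a b * eE v z c d + eE v z a b * eE u w c d

theorem dl_mul (a : Fin n) {X Y : Fin n} (hXY : X ≠ Y) : dl a X * dl a Y = 0 := by
  unfold dl
  split_ifs with h1 h2
  · exact absurd (h1 ▸ h2 : X = Y) (by exact fun h => hXY h)
  · simp
  · simp
  · simp

theorem dl_mul' (a : Fin n) {X Y : Fin n} (hXY : X ≠ Y) : dl a X * dl a Y = 0 :=
  dl_mul a hXY

theorem KK_diag {u v w z : Fin n} (huv : u ≠ v) (huw : u ≠ w) (huz : u ≠ z)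
    (hvw : v ≠ w) (hvz : v ≠ z) (hwz : w ≠ z) (a b d : Fin n) :
    KK u v w z a b a d = 0 := by
  have Huv := dl_mul a huv
  have Huw := dl_mul a huw
  have Huz := dl_mul a huz
  have Hvw := dl_mul a hvw
  have Hvz := dl_mul a hvz
  have Hwz := dl_mul a hwz
  unfold KK eE
  linear_combination (dl b v * dl d z) * Huw - (dl b v * dl d w) * Huz
    - (dl b u * dl d z) * Hvw + (dl b u * dl d w) * Hvz
    + (dl b z * dl d v) * Huw - (dl b z * dl d u) * Hvw
    - (dl b w * dl d v) * Huz + (dl b w * dl d u) * Hvz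
    + (dl b w * dl d z) * Huv - (dl b w * dl d v) * Huz
    - (dl b u * dl d z) * Hvw + (dl b u * dl d v) * Hwz
    + (dl b z * dl d w) * Huv - (dl b z * dl d u) * Hvw
    - (dl b v * dl d w) * Huz + (dl b v * dl d u) * Hwz

end LanAux

namespace LanAux
variable {n : ℕ}

theorem hasF_coord (m : Fin n) (x : Fin n → ℝ) :
    HasFDerivAt (fun y : Fin n → ℝ => y m)
      (ContinuousLinearMap.proj m : (Fin n → ℝ) →L[ℝ] ℝ) x :=
  (ContinuousLinearMap.proj m : (Fin n → ℝ) →L[ℝ] ℝ).hasFDerivAt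

theorem pd_cube (C : ℝ) (m r : Fin n) :
    pd r (fun x => C * (x m) ^ 3) = fun x => (C * 3 * (if m = r then 1 else 0)) * (x m) ^ 2 := by
  funext x
  have e : (fun x : Fin n → ℝ => C * (x m) ^ 3) = fun x => C * (x m * (x m * x m)) := by
    funext y; ring
  rw [e]
  have h := (((hasF_coord m x).fun_mul ((hasF_coord m x).fun_mul (hasF_coord m x))).const_mul C).fderiv
  simp only [pd, h]
  simp [Pi.single_apply]
  split_ifs <;> ring

theorem pd_sq (c : ℝ) (m q : Fin n) :
    pd q (fun x => c * (x m) ^ 2) = fun x => (c * 2 * (if m = q then 1 else 0)) * (x m) := by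
  funext x
  have e : (fun x : Fin n → ℝ => c * (x m) ^ 2) = fun x => c * (x m * x m) := by
    funext y; ring
  rw [e]
  have h := (((hasF_coord m x).fun_mul (hasF_coord m x)).const_mul c).fderiv
  simp only [pd, h]
  simp [Pi.single_apply]
  split_ifs <;> ring

theorem pd_lin (c : ℝ) (m p : Fin n) :
    pd p (fun x => c * (x m)) = fun _ => c * (if m = p then 1 else 0) := by
  funext x
  have h := ((hasF_coord m x).const_mul c).fderiv
  simp only [pd, h]
  simp [Pi.single_apply]

theorem pd3_cube (C : ℝ) (m p q r : Fin n) :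
    pd p (pd q (pd r (fun x => C * (x m) ^ 3))) 0
      = C * 6 * ((if m = p then (1:ℝ) else 0) * (if m = q then 1 else 0)
          * (if m = r then 1 else 0)) := by
  rw [pd_cube]
  rw [show (fun x : Fin n → ℝ => C * 3 * (if m = r then (1:ℝ) else 0) * (x m) ^ 2)
      = fun x => (C * 3 * (if m = r then (1:ℝ) else 0)) * (x m) ^ 2 from rfl, pd_sq, pd_lin]
  ring

end LanAux

namespace LanAux
variable {n : ℕ}
theorem c4pd {f : (Fin n → ℝ) → ℝ} (hf : ContDiff ℝ 4 f) (i : Fin n) :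
    ContDiff ℝ 3 (pd i f) :=
  contDiff_pd (m := 3) (by exact_mod_cast hf) i
end LanAux

namespace LanAux
/-- contracted auxiliary quantity -/
def Sf {n : ℕ} (η : Fin n → ℝ) (L : (Fin n → ℝ) → Fin n → Fin n → Fin n → ℝ)
    (β δ : Fin n) : (Fin n → ℝ) → ℝ :=
  fun x => ∑ j, η j * (pd j (fun y => L y β j δ) x - pd δ (fun y => L y β j j) x
    + pd j (fun y => L y δ j β) x - pd β (fun y => L y δ j j) x)
end LanAux

/-- **Non-existence in dimension `n ≥ 5`.**  For every `n ≥ 5` and every signature there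
is a smooth Weyl candidate on flat `ℝⁿ` admitting no four times continuously
differentiable Lanczos potential (with `L_{abc} = L_{[ab]c}`) via equation (4). -/
theorem lanczos_potential_does_not_generally_exist_dim_ge_five
    (n : ℕ) (hn : 5 ≤ n) (η : Fin n → ℝ) (hη : ∀ i, η i = 1 ∨ η i = -1) :
    ∃ W : (Fin n → ℝ) → Fin n → Fin n → Fin n → Fin n → ℝ,
      (∀ a b c d, ContDiff ℝ ∞ (fun x => W x a b c d)) ∧
      WeylCandidate η W ∧
      ¬ ∃ L : (Fin n → ℝ) → Fin n → Fin n → Fin n → ℝ,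
          (∀ a b c, ContDiff ℝ 4 (fun x => L x a b c)) ∧
          (∀ x a b c, L x a b c = - L x b a c) ∧
          Eq4 η W L := by
  have hη2 : ∀ i, η i * η i = 1 := by
    intro i; rcases hη i with h | h <;> rw [h] <;> norm_num
  let k0 : Fin n := ⟨0, by omega⟩
  let k1 : Fin n := ⟨1, by omega⟩
  let k2 : Fin n := ⟨2, by omega⟩
  let k3 : Fin n := ⟨3, by omega⟩
  let k4 : Fin n := ⟨4, by omega⟩
  have ne01 : k0 ≠ k1 := Fin.ne_of_val_ne (show (0:ℕ) ≠ 1 by norm_num)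
  have ne02 : k0 ≠ k2 := Fin.ne_of_val_ne (show (0:ℕ) ≠ 2 by norm_num)
  have ne03 : k0 ≠ k3 := Fin.ne_of_val_ne (show (0:ℕ) ≠ 3 by norm_num)
  have ne04 : k0 ≠ k4 := Fin.ne_of_val_ne (show (0:ℕ) ≠ 4 by norm_num)
  have ne10 : k1 ≠ k0 := Fin.ne_of_val_ne (show (1:ℕ) ≠ 0 by norm_num)
  have ne12 : k1 ≠ k2 := Fin.ne_of_val_ne (show (1:ℕ) ≠ 2 by norm_num)
  have ne13 : k1 ≠ k3 := Fin.ne_of_val_ne (show (1:ℕ) ≠ 3 by norm_num)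
  have ne14 : k1 ≠ k4 := Fin.ne_of_val_ne (show (1:ℕ) ≠ 4 by norm_num)
  have ne20 : k2 ≠ k0 := Fin.ne_of_val_ne (show (2:ℕ) ≠ 0 by norm_num)
  have ne21 : k2 ≠ k1 := Fin.ne_of_val_ne (show (2:ℕ) ≠ 1 by norm_num)
  have ne23 : k2 ≠ k3 := Fin.ne_of_val_ne (show (2:ℕ) ≠ 3 by norm_num)
  have ne24 : k2 ≠ k4 := Fin.ne_of_val_ne (show (2:ℕ) ≠ 4 by norm_num)
  have ne30 : k3 ≠ k0 := Fin.ne_of_val_ne (show (3:ℕ) ≠ 0 by norm_num)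
  have ne31 : k3 ≠ k1 := Fin.ne_of_val_ne (show (3:ℕ) ≠ 1 by norm_num)
  have ne32 : k3 ≠ k2 := Fin.ne_of_val_ne (show (3:ℕ) ≠ 2 by norm_num)
  have ne34 : k3 ≠ k4 := Fin.ne_of_val_ne (show (3:ℕ) ≠ 4 by norm_num)
  have ne40 : k4 ≠ k0 := Fin.ne_of_val_ne (show (4:ℕ) ≠ 0 by norm_num)
  have ne41 : k4 ≠ k1 := Fin.ne_of_val_ne (show (4:ℕ) ≠ 1 by norm_num)
  have ne42 : k4 ≠ k2 := Fin.ne_of_val_ne (show (4:ℕ) ≠ 2 by norm_num)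
  have ne43 : k4 ≠ k3 := Fin.ne_of_val_ne (show (4:ℕ) ≠ 3 by norm_num)
  refine ⟨fun x a b c d => LanAux.KK k0 k1 k3 k4 a b c d * (x k2) ^ 3, ?_, ?_, ?_⟩
  · intro a b c d
    exact contDiff_const.mul
      (((ContinuousLinearMap.proj k2 : (Fin n → ℝ) →L[ℝ] ℝ).contDiff).pow 3)
  · refine ⟨?_, ?_, ?_, ?_, ?_⟩
    · intro x a b c d; simp only [LanAux.KK, LanAux.eE]; ring
    · intro x a b c d; simp only [LanAux.KK, LanAux.eE]; ring
    · intro x a b c d; simp only [LanAux.KK, LanAux.eE]; ring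
    · intro x a b c d; simp only [asym3, LanAux.KK, LanAux.eE]; ring
    · intro x b d
      refine Finset.sum_eq_zero fun a _ => ?_
      show η a * (LanAux.KK k0 k1 k3 k4 a b a d * x k2 ^ 3) = 0
      rw [LanAux.KK_diag ne01 ne03 ne04 ne13 ne14 ne34 a b d]
      ring
  rintro ⟨L, hL, hLA, hEq⟩
  have hC2L : ∀ a b c : Fin n, ContDiff ℝ 2 (fun x => L x a b c) :=
    fun a b c => (hL a b c).of_le (by norm_num)
  have hC3 : ∀ (j a b c : Fin n), ContDiff ℝ 3 (pd j (fun x => L x a b c)) :=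
    fun j a b c => LanAux.c4pd (hL a b c) j
  have hC2S : ∀ (s a b c : Fin n), ContDiff ℝ 2 (pd s (fun x => L x a b c)) :=
    fun s a b c => (hC3 s a b c).of_le (by norm_num)
  have hC2pd2 : ∀ (r s a b c : Fin n), ContDiff ℝ 2 (pd r (pd s (fun x => L x a b c))) :=
    fun r s a b c => LanAux.c3pd (hC3 s a b c) r
  have hT34 : ∀ p q r s a b c : Fin n,
      pd p (pd q (pd r (pd s (fun x => L x a b c)))) 0
        = pd p (pd q (pd s (pd r (fun x => L x a b c)))) 0 := by
    intro p q r s a b c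
    rw [LanAux.pd_comm (hC2L a b c) r s]
  have hT23 : ∀ p q r s a b c : Fin n,
      pd p (pd q (pd r (pd s (fun x => L x a b c)))) 0
        = pd p (pd r (pd q (pd s (fun x => L x a b c)))) 0 := by
    intro p q r s a b c
    rw [LanAux.pd_comm (hC2S s a b c) q r]
  have hT12 : ∀ p q r s a b c : Fin n,
      pd p (pd q (pd r (pd s (fun x => L x a b c)))) 0
        = pd q (pd p (pd r (pd s (fun x => L x a b c)))) 0 := by
    intro p q r s a b c
    rw [LanAux.pd_comm (hC2pd2 r s a b c) p q]
  have hTA : ∀ p q r s a b c : Fin n,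
      pd p (pd q (pd r (pd s (fun x => L x a b c)))) 0
        = -pd p (pd q (pd r (pd s (fun x => L x b a c)))) 0 := by
    intro p q r s a b c
    have h : (fun x => L x a b c) = (fun x => -(L x b a c)) := funext fun x => hLA x a b c
    rw [h]
    simp only [LanAux.pd_neg]
  have hSf3 : ∀ β δ : Fin n, ContDiff ℝ 3 (LanAux.Sf η L β δ) := by
    intro β δ
    exact ContDiff.sum fun j _ => contDiff_const.mul
      ((((hC3 j β j δ).sub (hC3 δ β j j)).add (hC3 j δ j β)).sub (hC3 β δ j j))
  have hSD : ∀ p q r β δ : Fin n,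
      pd p (pd q (pd r (LanAux.Sf η L β δ))) 0
        = ∑ j, η j * (pd p (pd q (pd r (pd j (fun x => L x β j δ)))) 0 - pd p (pd q (pd r (pd δ (fun x => L x β j j)))) 0 + pd p (pd q (pd r (pd j (fun x => L x δ j β)))) 0 - pd p (pd q (pd r (pd β (fun x => L x δ j j)))) 0) := by
    intro p q r β δ
    rw [show LanAux.Sf η L β δ = (fun x => ∑ j,
        (fun (j : Fin n) (x : Fin n → ℝ) => η j * (pd j (fun y => L y β j δ) x
          - pd δ (fun y => L y β j j) x + pd j (fun y => L y δ j β) x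
          - pd β (fun y => L y δ j j) x)) j x) from rfl]
    rw [LanAux.pd3_sum Finset.univ (fun j => contDiff_const.mul
      ((((hC3 j β j δ).sub (hC3 δ β j j)).add (hC3 j δ j β)).sub (hC3 β δ j j))) p q r]
    refine Finset.sum_congr rfl fun j _ => ?_
    simp only [LanAux.pd3_cmul (η j)
        ((((hC3 j β j δ).sub (hC3 δ β j j)).add (hC3 j δ j β)).sub (hC3 β δ j j)) p q r,
      LanAux.pd3_comb4 (hC3 j β j δ) (hC3 δ β j j) (hC3 j δ j β) (hC3 β δ j j) p q r]
  have R1 : ∀ a b c d : Fin n, a ≠ c → a ≠ d → b ≠ c → b ≠ d →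
      (fun x => rhs4 η L x a b c d) = (fun x =>
        pd d (fun y => L y a b c) x - pd c (fun y => L y a b d) x
        + pd b (fun y => L y c d a) x - pd a (fun y => L y c d b) x) := by
    intro a b c d hac had hbc hbd
    funext x
    simp only [rhs4, asym22, gm, if_neg hac, if_neg had, if_neg hbc, if_neg hbd]
    ring
  have R2 : ∀ a b c : Fin n, a ≠ c → b ≠ c → ∀ i : Fin n,
      (fun x => rhs4 η L x a b i c) = (fun x =>
        pd c (fun y => L y a b i) x - pd i (fun y => L y a b c) x
        + pd b (fun y => L y i c a) x - pd a (fun y => L y i c b) x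
        - 4 / ((n:ℝ) - 2) / 4 * ((if a = i then η a else 0) * LanAux.Sf η L b c x
            - (if b = i then η b else 0) * LanAux.Sf η L a c x)) := by
    intro a b c hac hbc i
    funext x
    simp only [rhs4, asym22, gm, LanAux.Sf, if_neg hac, if_neg hbc]
    ring
  have grp1 : ∀ a b e : Fin n, a ≠ k3 → a ≠ k4 → b ≠ k3 → b ≠ k4 →
      (∑ i, η i * pd e (pd i (pd i (fun x => rhs4 η L x a b k3 k4))) 0)
        = ∑ i, η i * (pd e (pd i (pd i (pd k4 (fun x => L x a b k3)))) 0
            - pd e (pd i (pd i (pd k3 (fun x => L x a b k4)))) 0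
            + pd e (pd i (pd i (pd b (fun x => L x k3 k4 a)))) 0
            - pd e (pd i (pd i (pd a (fun x => L x k3 k4 b)))) 0) := by
    intro a b e hac had hbc hbd
    refine Finset.sum_congr rfl fun i _ => ?_
    simp only [R1 a b k3 k4 hac had hbc hbd,
      LanAux.pd3_comb4 (hC3 k4 a b k3) (hC3 k3 a b k4) (hC3 b k3 k4 a) (hC3 a k3 k4 b) e i i]
  have grp2 : ∀ a b e c d : Fin n, a ≠ c → b ≠ c →
      (∑ i, η i * pd e (pd i (pd d (fun x => rhs4 η L x a b i c))) 0)
        = (∑ i, η i * (pd e (pd i (pd d (pd c (fun x => L x a b i)))) 0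
            - pd e (pd i (pd d (pd i (fun x => L x a b c)))) 0
            + pd e (pd i (pd d (pd b (fun x => L x i c a)))) 0
            - pd e (pd i (pd d (pd a (fun x => L x i c b)))) 0))
          - 4 / ((n:ℝ) - 2) / 4 * ((∑ j, η j * (pd e (pd a (pd d (pd j (fun x => L x b j c)))) 0 - pd e (pd a (pd d (pd c (fun x => L x b j j)))) 0 + pd e (pd a (pd d (pd j (fun x => L x c j b)))) 0 - pd e (pd a (pd d (pd b (fun x => L x c j j)))) 0))
            - (∑ j, η j * (pd e (pd b (pd d (pd j (fun x => L x a j c)))) 0 - pd e (pd b (pd d (pd c (fun x => L x a j j)))) 0 + pd e (pd b (pd d (pd j (fun x => L x c j a)))) 0 - pd e (pd b (pd d (pd a (fun x => L x c j j)))) 0))) := by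
    intro a b e c d hac hbc
    have step : ∀ i : Fin n, η i * pd e (pd i (pd d (fun x => rhs4 η L x a b i c))) 0
        = η i * (pd e (pd i (pd d (pd c (fun x => L x a b i)))) 0
            - pd e (pd i (pd d (pd i (fun x => L x a b c)))) 0
            + pd e (pd i (pd d (pd b (fun x => L x i c a)))) 0
            - pd e (pd i (pd d (pd a (fun x => L x i c b)))) 0)
          - (if a = i then 4 / ((n:ℝ) - 2) / 4
              * (η i * η a * pd e (pd i (pd d (LanAux.Sf η L b c))) 0) else 0)
          + (if b = i then 4 / ((n:ℝ) - 2) / 4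
              * (η i * η b * pd e (pd i (pd d (LanAux.Sf η L a c))) 0) else 0) := by
      intro i
      simp only [R2 a b c hac hbc i,
        LanAux.pd3_comb6 (4 / ((n:ℝ) - 2) / 4) (if a = i then η a else 0)
          (if b = i then η b else 0) (hC3 c a b i) (hC3 i a b c) (hC3 b i c a)
          (hC3 a i c b) (hSf3 b c) (hSf3 a c) e i d]
      split_ifs <;> ring
    rw [Finset.sum_congr rfl fun i _ => step i]
    rw [Finset.sum_add_distrib, Finset.sum_sub_distrib, Finset.sum_ite_eq, Finset.sum_ite_eq]
    simp only [Finset.mem_univ, if_true]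
    rw [hη2 a, hη2 b, hSD e a d b c, hSD e b d a c]
    ring
  have hfun : ∀ a b c d : Fin n,
      (fun x => LanAux.KK k0 k1 k3 k4 a b c d * (x k2) ^ 3)
        = (fun x => rhs4 η L x a b c d) :=
    fun a b c d => funext fun x => hEq x a b c d
  have main : (((∑ i, η i * pd k2 (pd i (pd i (fun x => LanAux.KK k0 k1 k3 k4 k0 k1 k3 k4 * (x k2) ^ 3))) 0) + (∑ i, η i * pd k2 (pd i (pd k4 (fun x => LanAux.KK k0 k1 k3 k4 k0 k1 i k3 * (x k2) ^ 3))) 0) - (∑ i, η i * pd k2 (pd i (pd k3 (fun x => LanAux.KK k0 k1 k3 k4 k0 k1 i k4 * (x k2) ^ 3))) 0))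
      - ((∑ i, η i * pd k1 (pd i (pd i (fun x => LanAux.KK k0 k1 k3 k4 k0 k2 k3 k4 * (x k2) ^ 3))) 0) + (∑ i, η i * pd k1 (pd i (pd k4 (fun x => LanAux.KK k0 k1 k3 k4 k0 k2 i k3 * (x k2) ^ 3))) 0) - (∑ i, η i * pd k1 (pd i (pd k3 (fun x => LanAux.KK k0 k1 k3 k4 k0 k2 i k4 * (x k2) ^ 3))) 0))
      - ((∑ i, η i * pd k2 (pd i (pd i (fun x => LanAux.KK k0 k1 k3 k4 k1 k0 k3 k4 * (x k2) ^ 3))) 0) + (∑ i, η i * pd k2 (pd i (pd k4 (fun x => LanAux.KK k0 k1 k3 k4 k1 k0 i k3 * (x k2) ^ 3))) 0) - (∑ i, η i * pd k2 (pd i (pd k3 (fun x => LanAux.KK k0 k1 k3 k4 k1 k0 i k4 * (x k2) ^ 3))) 0))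
      + ((∑ i, η i * pd k0 (pd i (pd i (fun x => LanAux.KK k0 k1 k3 k4 k1 k2 k3 k4 * (x k2) ^ 3))) 0) + (∑ i, η i * pd k0 (pd i (pd k4 (fun x => LanAux.KK k0 k1 k3 k4 k1 k2 i k3 * (x k2) ^ 3))) 0) - (∑ i, η i * pd k0 (pd i (pd k3 (fun x => LanAux.KK k0 k1 k3 k4 k1 k2 i k4 * (x k2) ^ 3))) 0))
      + ((∑ i, η i * pd k1 (pd i (pd i (fun x => LanAux.KK k0 k1 k3 k4 k2 k0 k3 k4 * (x k2) ^ 3))) 0) + (∑ i, η i * pd k1 (pd i (pd k4 (fun x => LanAux.KK k0 k1 k3 k4 k2 k0 i k3 * (x k2) ^ 3))) 0) - (∑ i, η i * pd k1 (pd i (pd k3 (fun x => LanAux.KK k0 k1 k3 k4 k2 k0 i k4 * (x k2) ^ 3))) 0))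
      - ((∑ i, η i * pd k0 (pd i (pd i (fun x => LanAux.KK k0 k1 k3 k4 k2 k1 k3 k4 * (x k2) ^ 3))) 0) + (∑ i, η i * pd k0 (pd i (pd k4 (fun x => LanAux.KK k0 k1 k3 k4 k2 k1 i k3 * (x k2) ^ 3))) 0) - (∑ i, η i * pd k0 (pd i (pd k3 (fun x => LanAux.KK k0 k1 k3 k4 k2 k1 i k4 * (x k2) ^ 3))) 0))) = 0 := by
    simp only [hfun]
    rw [grp1 k0 k1 k2 ne03 ne04 ne13 ne14,
      grp2 k0 k1 k2 k3 k4 ne03 ne13,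
      grp2 k0 k1 k2 k4 k3 ne04 ne14,
      grp1 k0 k2 k1 ne03 ne04 ne23 ne24,
      grp2 k0 k2 k1 k3 k4 ne03 ne23,
      grp2 k0 k2 k1 k4 k3 ne04 ne24,
      grp1 k1 k0 k2 ne13 ne14 ne03 ne04,
      grp2 k1 k0 k2 k3 k4 ne13 ne03,
      grp2 k1 k0 k2 k4 k3 ne14 ne04,
      grp1 k1 k2 k0 ne13 ne14 ne23 ne24,
      grp2 k1 k2 k0 k3 k4 ne13 ne23,
      grp2 k1 k2 k0 k4 k3 ne14 ne24,
      grp1 k2 k0 k1 ne23 ne24 ne03 ne04,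
      grp2 k2 k0 k1 k3 k4 ne23 ne03,
      grp2 k2 k0 k1 k4 k3 ne24 ne04,
      grp1 k2 k1 k0 ne23 ne24 ne13 ne14,
      grp2 k2 k1 k0 k3 k4 ne23 ne13,
      grp2 k2 k1 k0 k4 k3 ne24 ne14]
    simp only [Finset.mul_sum, ← Finset.sum_sub_distrib, ← Finset.sum_add_distrib]
    refine Finset.sum_eq_zero fun t _ => ?_
    have ce0 : pd k2 (pd t (pd t (pd k4 (fun x => L x k0 k1 k3)))) 0 = pd k2 (pd k4 (pd t (pd t (fun x => L x k0 k1 k3)))) 0 := by rw [hT34 k2 t t k4 k0 k1 k3, hT23 k2 t k4 t k0 k1 k3]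
    have ce1 : pd k2 (pd t (pd t (pd k3 (fun x => L x k0 k1 k4)))) 0 = pd k2 (pd k3 (pd t (pd t (fun x => L x k0 k1 k4)))) 0 := by rw [hT34 k2 t t k3 k0 k1 k4, hT23 k2 t k3 t k0 k1 k4]
    have ce2 : pd k2 (pd t (pd t (pd k1 (fun x => L x k3 k4 k0)))) 0 = pd k1 (pd k2 (pd t (pd t (fun x => L x k3 k4 k0)))) 0 := by rw [hT34 k2 t t k1 k3 k4 k0, hT23 k2 t k1 t k3 k4 k0, hT12 k2 k1 t t k3 k4 k0]
    have ce3 : pd k2 (pd t (pd t (pd k0 (fun x => L x k3 k4 k1)))) 0 = pd k0 (pd k2 (pd t (pd t (fun x => L x k3 k4 k1)))) 0 := by rw [hT34 k2 t t k0 k3 k4 k1, hT23 k2 t k0 t k3 k4 k1, hT12 k2 k0 t t k3 k4 k1]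
    have ce4 : pd k2 (pd t (pd k4 (pd k3 (fun x => L x k0 k1 t)))) 0 = pd k2 (pd k3 (pd k4 (pd t (fun x => L x k0 k1 t)))) 0 := by rw [hT23 k2 t k4 k3 k0 k1 t, hT34 k2 k4 t k3 k0 k1 t, hT23 k2 k4 k3 t k0 k1 t]
    have ce5 : pd k2 (pd t (pd k4 (pd t (fun x => L x k0 k1 k3)))) 0 = pd k2 (pd k4 (pd t (pd t (fun x => L x k0 k1 k3)))) 0 := by rw [hT23 k2 t k4 t k0 k1 k3]
    have ce6 : pd k2 (pd t (pd k4 (pd k1 (fun x => L x t k3 k0)))) 0 = -(pd k1 (pd k2 (pd k4 (pd t (fun x => L x k3 t k0)))) 0) := by rw [hT23 k2 t k4 k1 t k3 k0, hT34 k2 k4 t k1 t k3 k0, hT23 k2 k4 k1 t t k3 k0, hT12 k2 k1 k4 t t k3 k0, hTA k1 k2 k4 t t k3 k0]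
    have ce7 : pd k2 (pd t (pd k4 (pd k0 (fun x => L x t k3 k1)))) 0 = -(pd k0 (pd k2 (pd k4 (pd t (fun x => L x k3 t k1)))) 0) := by rw [hT23 k2 t k4 k0 t k3 k1, hT34 k2 k4 t k0 t k3 k1, hT23 k2 k4 k0 t t k3 k1, hT12 k2 k0 k4 t t k3 k1, hTA k0 k2 k4 t t k3 k1]
    have ce8 : pd k2 (pd k0 (pd k4 (pd t (fun x => L x k1 t k3)))) 0 = pd k0 (pd k2 (pd k4 (pd t (fun x => L x k1 t k3)))) 0 := by rw [hT12 k2 k0 k4 t k1 t k3]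
    have ce9 : pd k2 (pd k0 (pd k4 (pd k3 (fun x => L x k1 t t)))) 0 = pd k0 (pd k2 (pd k3 (pd k4 (fun x => L x k1 t t)))) 0 := by rw [hT12 k2 k0 k4 k3 k1 t t, hT34 k0 k2 k4 k3 k1 t t]
    have ce10 : pd k2 (pd k0 (pd k4 (pd t (fun x => L x k3 t k1)))) 0 = pd k0 (pd k2 (pd k4 (pd t (fun x => L x k3 t k1)))) 0 := by rw [hT12 k2 k0 k4 t k3 t k1]
    have ce11 : pd k2 (pd k0 (pd k4 (pd k1 (fun x => L x k3 t t)))) 0 = pd k0 (pd k1 (pd k2 (pd k4 (fun x => L x k3 t t)))) 0 := by rw [hT12 k2 k0 k4 k1 k3 t t, hT34 k0 k2 k4 k1 k3 t t, hT23 k0 k2 k1 k4 k3 t t]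
    have ce12 : pd k2 (pd k1 (pd k4 (pd t (fun x => L x k0 t k3)))) 0 = pd k1 (pd k2 (pd k4 (pd t (fun x => L x k0 t k3)))) 0 := by rw [hT12 k2 k1 k4 t k0 t k3]
    have ce13 : pd k2 (pd k1 (pd k4 (pd k3 (fun x => L x k0 t t)))) 0 = pd k1 (pd k2 (pd k3 (pd k4 (fun x => L x k0 t t)))) 0 := by rw [hT12 k2 k1 k4 k3 k0 t t, hT34 k1 k2 k4 k3 k0 t t]
    have ce14 : pd k2 (pd k1 (pd k4 (pd t (fun x => L x k3 t k0)))) 0 = pd k1 (pd k2 (pd k4 (pd t (fun x => L x k3 t k0)))) 0 := by rw [hT12 k2 k1 k4 t k3 t k0]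
    have ce15 : pd k2 (pd k1 (pd k4 (pd k0 (fun x => L x k3 t t)))) 0 = pd k0 (pd k1 (pd k2 (pd k4 (fun x => L x k3 t t)))) 0 := by rw [hT12 k2 k1 k4 k0 k3 t t, hT34 k1 k2 k4 k0 k3 t t, hT23 k1 k2 k0 k4 k3 t t, hT12 k1 k0 k2 k4 k3 t t]
    have ce16 : pd k2 (pd t (pd k3 (pd k4 (fun x => L x k0 k1 t)))) 0 = pd k2 (pd k3 (pd k4 (pd t (fun x => L x k0 k1 t)))) 0 := by rw [hT23 k2 t k3 k4 k0 k1 t, hT34 k2 k3 t k4 k0 k1 t]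
    have ce17 : pd k2 (pd t (pd k3 (pd t (fun x => L x k0 k1 k4)))) 0 = pd k2 (pd k3 (pd t (pd t (fun x => L x k0 k1 k4)))) 0 := by rw [hT23 k2 t k3 t k0 k1 k4]
    have ce18 : pd k2 (pd t (pd k3 (pd k1 (fun x => L x t k4 k0)))) 0 = -(pd k1 (pd k2 (pd k3 (pd t (fun x => L x k4 t k0)))) 0) := by rw [hT23 k2 t k3 k1 t k4 k0, hT34 k2 k3 t k1 t k4 k0, hT23 k2 k3 k1 t t k4 k0, hT12 k2 k1 k3 t t k4 k0, hTA k1 k2 k3 t t k4 k0]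
    have ce19 : pd k2 (pd t (pd k3 (pd k0 (fun x => L x t k4 k1)))) 0 = -(pd k0 (pd k2 (pd k3 (pd t (fun x => L x k4 t k1)))) 0) := by rw [hT23 k2 t k3 k0 t k4 k1, hT34 k2 k3 t k0 t k4 k1, hT23 k2 k3 k0 t t k4 k1, hT12 k2 k0 k3 t t k4 k1, hTA k0 k2 k3 t t k4 k1]
    have ce20 : pd k2 (pd k0 (pd k3 (pd t (fun x => L x k1 t k4)))) 0 = pd k0 (pd k2 (pd k3 (pd t (fun x => L x k1 t k4)))) 0 := by rw [hT12 k2 k0 k3 t k1 t k4]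
    have ce21 : pd k2 (pd k0 (pd k3 (pd k4 (fun x => L x k1 t t)))) 0 = pd k0 (pd k2 (pd k3 (pd k4 (fun x => L x k1 t t)))) 0 := by rw [hT12 k2 k0 k3 k4 k1 t t]
    have ce22 : pd k2 (pd k0 (pd k3 (pd t (fun x => L x k4 t k1)))) 0 = pd k0 (pd k2 (pd k3 (pd t (fun x => L x k4 t k1)))) 0 := by rw [hT12 k2 k0 k3 t k4 t k1]
    have ce23 : pd k2 (pd k0 (pd k3 (pd k1 (fun x => L x k4 t t)))) 0 = pd k0 (pd k1 (pd k2 (pd k3 (fun x => L x k4 t t)))) 0 := by rw [hT12 k2 k0 k3 k1 k4 t t, hT34 k0 k2 k3 k1 k4 t t, hT23 k0 k2 k1 k3 k4 t t]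
    have ce24 : pd k2 (pd k1 (pd k3 (pd t (fun x => L x k0 t k4)))) 0 = pd k1 (pd k2 (pd k3 (pd t (fun x => L x k0 t k4)))) 0 := by rw [hT12 k2 k1 k3 t k0 t k4]
    have ce25 : pd k2 (pd k1 (pd k3 (pd k4 (fun x => L x k0 t t)))) 0 = pd k1 (pd k2 (pd k3 (pd k4 (fun x => L x k0 t t)))) 0 := by rw [hT12 k2 k1 k3 k4 k0 t t]
    have ce26 : pd k2 (pd k1 (pd k3 (pd t (fun x => L x k4 t k0)))) 0 = pd k1 (pd k2 (pd k3 (pd t (fun x => L x k4 t k0)))) 0 := by rw [hT12 k2 k1 k3 t k4 t k0]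
    have ce27 : pd k2 (pd k1 (pd k3 (pd k0 (fun x => L x k4 t t)))) 0 = pd k0 (pd k1 (pd k2 (pd k3 (fun x => L x k4 t t)))) 0 := by rw [hT12 k2 k1 k3 k0 k4 t t, hT34 k1 k2 k3 k0 k4 t t, hT23 k1 k2 k0 k3 k4 t t, hT12 k1 k0 k2 k3 k4 t t]
    have ce28 : pd k1 (pd t (pd t (pd k4 (fun x => L x k0 k2 k3)))) 0 = pd k1 (pd k4 (pd t (pd t (fun x => L x k0 k2 k3)))) 0 := by rw [hT34 k1 t t k4 k0 k2 k3, hT23 k1 t k4 t k0 k2 k3]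
    have ce29 : pd k1 (pd t (pd t (pd k3 (fun x => L x k0 k2 k4)))) 0 = pd k1 (pd k3 (pd t (pd t (fun x => L x k0 k2 k4)))) 0 := by rw [hT34 k1 t t k3 k0 k2 k4, hT23 k1 t k3 t k0 k2 k4]
    have ce30 : pd k1 (pd t (pd t (pd k2 (fun x => L x k3 k4 k0)))) 0 = pd k1 (pd k2 (pd t (pd t (fun x => L x k3 k4 k0)))) 0 := by rw [hT34 k1 t t k2 k3 k4 k0, hT23 k1 t k2 t k3 k4 k0]
    have ce31 : pd k1 (pd t (pd t (pd k0 (fun x => L x k3 k4 k2)))) 0 = pd k0 (pd k1 (pd t (pd t (fun x => L x k3 k4 k2)))) 0 := by rw [hT34 k1 t t k0 k3 k4 k2, hT23 k1 t k0 t k3 k4 k2, hT12 k1 k0 t t k3 k4 k2]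
    have ce32 : pd k1 (pd t (pd k4 (pd k3 (fun x => L x k0 k2 t)))) 0 = pd k1 (pd k3 (pd k4 (pd t (fun x => L x k0 k2 t)))) 0 := by rw [hT23 k1 t k4 k3 k0 k2 t, hT34 k1 k4 t k3 k0 k2 t, hT23 k1 k4 k3 t k0 k2 t]
    have ce33 : pd k1 (pd t (pd k4 (pd t (fun x => L x k0 k2 k3)))) 0 = pd k1 (pd k4 (pd t (pd t (fun x => L x k0 k2 k3)))) 0 := by rw [hT23 k1 t k4 t k0 k2 k3]
    have ce34 : pd k1 (pd t (pd k4 (pd k2 (fun x => L x t k3 k0)))) 0 = -(pd k1 (pd k2 (pd k4 (pd t (fun x => L x k3 t k0)))) 0) := by rw [hT23 k1 t k4 k2 t k3 k0, hT34 k1 k4 t k2 t k3 k0, hT23 k1 k4 k2 t t k3 k0, hTA k1 k2 k4 t t k3 k0]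
    have ce35 : pd k1 (pd t (pd k4 (pd k0 (fun x => L x t k3 k2)))) 0 = -(pd k0 (pd k1 (pd k4 (pd t (fun x => L x k3 t k2)))) 0) := by rw [hT23 k1 t k4 k0 t k3 k2, hT34 k1 k4 t k0 t k3 k2, hT23 k1 k4 k0 t t k3 k2, hT12 k1 k0 k4 t t k3 k2, hTA k0 k1 k4 t t k3 k2]
    have ce36 : pd k1 (pd k0 (pd k4 (pd t (fun x => L x k2 t k3)))) 0 = pd k0 (pd k1 (pd k4 (pd t (fun x => L x k2 t k3)))) 0 := by rw [hT12 k1 k0 k4 t k2 t k3]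
    have ce37 : pd k1 (pd k0 (pd k4 (pd k3 (fun x => L x k2 t t)))) 0 = pd k0 (pd k1 (pd k3 (pd k4 (fun x => L x k2 t t)))) 0 := by rw [hT12 k1 k0 k4 k3 k2 t t, hT34 k0 k1 k4 k3 k2 t t]
    have ce38 : pd k1 (pd k0 (pd k4 (pd t (fun x => L x k3 t k2)))) 0 = pd k0 (pd k1 (pd k4 (pd t (fun x => L x k3 t k2)))) 0 := by rw [hT12 k1 k0 k4 t k3 t k2]
    have ce39 : pd k1 (pd k0 (pd k4 (pd k2 (fun x => L x k3 t t)))) 0 = pd k0 (pd k1 (pd k2 (pd k4 (fun x => L x k3 t t)))) 0 := by rw [hT12 k1 k0 k4 k2 k3 t t, hT34 k0 k1 k4 k2 k3 t t]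
    have ce40 : pd k1 (pd k2 (pd k4 (pd k3 (fun x => L x k0 t t)))) 0 = pd k1 (pd k2 (pd k3 (pd k4 (fun x => L x k0 t t)))) 0 := by rw [hT34 k1 k2 k4 k3 k0 t t]
    have ce41 : pd k1 (pd k2 (pd k4 (pd k0 (fun x => L x k3 t t)))) 0 = pd k0 (pd k1 (pd k2 (pd k4 (fun x => L x k3 t t)))) 0 := by rw [hT34 k1 k2 k4 k0 k3 t t, hT23 k1 k2 k0 k4 k3 t t, hT12 k1 k0 k2 k4 k3 t t]
    have ce42 : pd k1 (pd t (pd k3 (pd k4 (fun x => L x k0 k2 t)))) 0 = pd k1 (pd k3 (pd k4 (pd t (fun x => L x k0 k2 t)))) 0 := by rw [hT23 k1 t k3 k4 k0 k2 t, hT34 k1 k3 t k4 k0 k2 t]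
    have ce43 : pd k1 (pd t (pd k3 (pd t (fun x => L x k0 k2 k4)))) 0 = pd k1 (pd k3 (pd t (pd t (fun x => L x k0 k2 k4)))) 0 := by rw [hT23 k1 t k3 t k0 k2 k4]
    have ce44 : pd k1 (pd t (pd k3 (pd k2 (fun x => L x t k4 k0)))) 0 = -(pd k1 (pd k2 (pd k3 (pd t (fun x => L x k4 t k0)))) 0) := by rw [hT23 k1 t k3 k2 t k4 k0, hT34 k1 k3 t k2 t k4 k0, hT23 k1 k3 k2 t t k4 k0, hTA k1 k2 k3 t t k4 k0]
    have ce45 : pd k1 (pd t (pd k3 (pd k0 (fun x => L x t k4 k2)))) 0 = -(pd k0 (pd k1 (pd k3 (pd t (fun x => L x k4 t k2)))) 0) := by rw [hT23 k1 t k3 k0 t k4 k2, hT34 k1 k3 t k0 t k4 k2, hT23 k1 k3 k0 t t k4 k2, hT12 k1 k0 k3 t t k4 k2, hTA k0 k1 k3 t t k4 k2]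
    have ce46 : pd k1 (pd k0 (pd k3 (pd t (fun x => L x k2 t k4)))) 0 = pd k0 (pd k1 (pd k3 (pd t (fun x => L x k2 t k4)))) 0 := by rw [hT12 k1 k0 k3 t k2 t k4]
    have ce47 : pd k1 (pd k0 (pd k3 (pd k4 (fun x => L x k2 t t)))) 0 = pd k0 (pd k1 (pd k3 (pd k4 (fun x => L x k2 t t)))) 0 := by rw [hT12 k1 k0 k3 k4 k2 t t]
    have ce48 : pd k1 (pd k0 (pd k3 (pd t (fun x => L x k4 t k2)))) 0 = pd k0 (pd k1 (pd k3 (pd t (fun x => L x k4 t k2)))) 0 := by rw [hT12 k1 k0 k3 t k4 t k2]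
    have ce49 : pd k1 (pd k0 (pd k3 (pd k2 (fun x => L x k4 t t)))) 0 = pd k0 (pd k1 (pd k2 (pd k3 (fun x => L x k4 t t)))) 0 := by rw [hT12 k1 k0 k3 k2 k4 t t, hT34 k0 k1 k3 k2 k4 t t]
    have ce50 : pd k1 (pd k2 (pd k3 (pd k0 (fun x => L x k4 t t)))) 0 = pd k0 (pd k1 (pd k2 (pd k3 (fun x => L x k4 t t)))) 0 := by rw [hT34 k1 k2 k3 k0 k4 t t, hT23 k1 k2 k0 k3 k4 t t, hT12 k1 k0 k2 k3 k4 t t]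
    have ce51 : pd k2 (pd t (pd t (pd k4 (fun x => L x k1 k0 k3)))) 0 = -(pd k2 (pd k4 (pd t (pd t (fun x => L x k0 k1 k3)))) 0) := by rw [hT34 k2 t t k4 k1 k0 k3, hT23 k2 t k4 t k1 k0 k3, hTA k2 k4 t t k1 k0 k3]
    have ce52 : pd k2 (pd t (pd t (pd k3 (fun x => L x k1 k0 k4)))) 0 = -(pd k2 (pd k3 (pd t (pd t (fun x => L x k0 k1 k4)))) 0) := by rw [hT34 k2 t t k3 k1 k0 k4, hT23 k2 t k3 t k1 k0 k4, hTA k2 k3 t t k1 k0 k4]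
    have ce53 : pd k2 (pd t (pd k4 (pd k3 (fun x => L x k1 k0 t)))) 0 = -(pd k2 (pd k3 (pd k4 (pd t (fun x => L x k0 k1 t)))) 0) := by rw [hT23 k2 t k4 k3 k1 k0 t, hT34 k2 k4 t k3 k1 k0 t, hT23 k2 k4 k3 t k1 k0 t, hTA k2 k3 k4 t k1 k0 t]
    have ce54 : pd k2 (pd t (pd k4 (pd t (fun x => L x k1 k0 k3)))) 0 = -(pd k2 (pd k4 (pd t (pd t (fun x => L x k0 k1 k3)))) 0) := by rw [hT23 k2 t k4 t k1 k0 k3, hTA k2 k4 t t k1 k0 k3]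
    have ce55 : pd k2 (pd t (pd k3 (pd k4 (fun x => L x k1 k0 t)))) 0 = -(pd k2 (pd k3 (pd k4 (pd t (fun x => L x k0 k1 t)))) 0) := by rw [hT23 k2 t k3 k4 k1 k0 t, hT34 k2 k3 t k4 k1 k0 t, hTA k2 k3 k4 t k1 k0 t]
    have ce56 : pd k2 (pd t (pd k3 (pd t (fun x => L x k1 k0 k4)))) 0 = -(pd k2 (pd k3 (pd t (pd t (fun x => L x k0 k1 k4)))) 0) := by rw [hT23 k2 t k3 t k1 k0 k4, hTA k2 k3 t t k1 k0 k4]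
    have ce57 : pd k0 (pd t (pd t (pd k4 (fun x => L x k1 k2 k3)))) 0 = pd k0 (pd k4 (pd t (pd t (fun x => L x k1 k2 k3)))) 0 := by rw [hT34 k0 t t k4 k1 k2 k3, hT23 k0 t k4 t k1 k2 k3]
    have ce58 : pd k0 (pd t (pd t (pd k3 (fun x => L x k1 k2 k4)))) 0 = pd k0 (pd k3 (pd t (pd t (fun x => L x k1 k2 k4)))) 0 := by rw [hT34 k0 t t k3 k1 k2 k4, hT23 k0 t k3 t k1 k2 k4]
    have ce59 : pd k0 (pd t (pd t (pd k2 (fun x => L x k3 k4 k1)))) 0 = pd k0 (pd k2 (pd t (pd t (fun x => L x k3 k4 k1)))) 0 := by rw [hT34 k0 t t k2 k3 k4 k1, hT23 k0 t k2 t k3 k4 k1]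
    have ce60 : pd k0 (pd t (pd t (pd k1 (fun x => L x k3 k4 k2)))) 0 = pd k0 (pd k1 (pd t (pd t (fun x => L x k3 k4 k2)))) 0 := by rw [hT34 k0 t t k1 k3 k4 k2, hT23 k0 t k1 t k3 k4 k2]
    have ce61 : pd k0 (pd t (pd k4 (pd k3 (fun x => L x k1 k2 t)))) 0 = pd k0 (pd k3 (pd k4 (pd t (fun x => L x k1 k2 t)))) 0 := by rw [hT23 k0 t k4 k3 k1 k2 t, hT34 k0 k4 t k3 k1 k2 t, hT23 k0 k4 k3 t k1 k2 t]
    have ce62 : pd k0 (pd t (pd k4 (pd t (fun x => L x k1 k2 k3)))) 0 = pd k0 (pd k4 (pd t (pd t (fun x => L x k1 k2 k3)))) 0 := by rw [hT23 k0 t k4 t k1 k2 k3]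
    have ce63 : pd k0 (pd t (pd k4 (pd k2 (fun x => L x t k3 k1)))) 0 = -(pd k0 (pd k2 (pd k4 (pd t (fun x => L x k3 t k1)))) 0) := by rw [hT23 k0 t k4 k2 t k3 k1, hT34 k0 k4 t k2 t k3 k1, hT23 k0 k4 k2 t t k3 k1, hTA k0 k2 k4 t t k3 k1]
    have ce64 : pd k0 (pd t (pd k4 (pd k1 (fun x => L x t k3 k2)))) 0 = -(pd k0 (pd k1 (pd k4 (pd t (fun x => L x k3 t k2)))) 0) := by rw [hT23 k0 t k4 k1 t k3 k2, hT34 k0 k4 t k1 t k3 k2, hT23 k0 k4 k1 t t k3 k2, hTA k0 k1 k4 t t k3 k2]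
    have ce65 : pd k0 (pd k1 (pd k4 (pd k3 (fun x => L x k2 t t)))) 0 = pd k0 (pd k1 (pd k3 (pd k4 (fun x => L x k2 t t)))) 0 := by rw [hT34 k0 k1 k4 k3 k2 t t]
    have ce66 : pd k0 (pd k1 (pd k4 (pd k2 (fun x => L x k3 t t)))) 0 = pd k0 (pd k1 (pd k2 (pd k4 (fun x => L x k3 t t)))) 0 := by rw [hT34 k0 k1 k4 k2 k3 t t]
    have ce67 : pd k0 (pd k2 (pd k4 (pd k3 (fun x => L x k1 t t)))) 0 = pd k0 (pd k2 (pd k3 (pd k4 (fun x => L x k1 t t)))) 0 := by rw [hT34 k0 k2 k4 k3 k1 t t]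
    have ce68 : pd k0 (pd k2 (pd k4 (pd k1 (fun x => L x k3 t t)))) 0 = pd k0 (pd k1 (pd k2 (pd k4 (fun x => L x k3 t t)))) 0 := by rw [hT34 k0 k2 k4 k1 k3 t t, hT23 k0 k2 k1 k4 k3 t t]
    have ce69 : pd k0 (pd t (pd k3 (pd k4 (fun x => L x k1 k2 t)))) 0 = pd k0 (pd k3 (pd k4 (pd t (fun x => L x k1 k2 t)))) 0 := by rw [hT23 k0 t k3 k4 k1 k2 t, hT34 k0 k3 t k4 k1 k2 t]
    have ce70 : pd k0 (pd t (pd k3 (pd t (fun x => L x k1 k2 k4)))) 0 = pd k0 (pd k3 (pd t (pd t (fun x => L x k1 k2 k4)))) 0 := by rw [hT23 k0 t k3 t k1 k2 k4]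
    have ce71 : pd k0 (pd t (pd k3 (pd k2 (fun x => L x t k4 k1)))) 0 = -(pd k0 (pd k2 (pd k3 (pd t (fun x => L x k4 t k1)))) 0) := by rw [hT23 k0 t k3 k2 t k4 k1, hT34 k0 k3 t k2 t k4 k1, hT23 k0 k3 k2 t t k4 k1, hTA k0 k2 k3 t t k4 k1]
    have ce72 : pd k0 (pd t (pd k3 (pd k1 (fun x => L x t k4 k2)))) 0 = -(pd k0 (pd k1 (pd k3 (pd t (fun x => L x k4 t k2)))) 0) := by rw [hT23 k0 t k3 k1 t k4 k2, hT34 k0 k3 t k1 t k4 k2, hT23 k0 k3 k1 t t k4 k2, hTA k0 k1 k3 t t k4 k2]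
    have ce73 : pd k0 (pd k1 (pd k3 (pd k2 (fun x => L x k4 t t)))) 0 = pd k0 (pd k1 (pd k2 (pd k3 (fun x => L x k4 t t)))) 0 := by rw [hT34 k0 k1 k3 k2 k4 t t]
    have ce74 : pd k0 (pd k2 (pd k3 (pd k1 (fun x => L x k4 t t)))) 0 = pd k0 (pd k1 (pd k2 (pd k3 (fun x => L x k4 t t)))) 0 := by rw [hT34 k0 k2 k3 k1 k4 t t, hT23 k0 k2 k1 k3 k4 t t]
    have ce75 : pd k1 (pd t (pd t (pd k4 (fun x => L x k2 k0 k3)))) 0 = -(pd k1 (pd k4 (pd t (pd t (fun x => L x k0 k2 k3)))) 0) := by rw [hT34 k1 t t k4 k2 k0 k3, hT23 k1 t k4 t k2 k0 k3, hTA k1 k4 t t k2 k0 k3]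
    have ce76 : pd k1 (pd t (pd t (pd k3 (fun x => L x k2 k0 k4)))) 0 = -(pd k1 (pd k3 (pd t (pd t (fun x => L x k0 k2 k4)))) 0) := by rw [hT34 k1 t t k3 k2 k0 k4, hT23 k1 t k3 t k2 k0 k4, hTA k1 k3 t t k2 k0 k4]
    have ce77 : pd k1 (pd t (pd k4 (pd k3 (fun x => L x k2 k0 t)))) 0 = -(pd k1 (pd k3 (pd k4 (pd t (fun x => L x k0 k2 t)))) 0) := by rw [hT23 k1 t k4 k3 k2 k0 t, hT34 k1 k4 t k3 k2 k0 t, hT23 k1 k4 k3 t k2 k0 t, hTA k1 k3 k4 t k2 k0 t]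
    have ce78 : pd k1 (pd t (pd k4 (pd t (fun x => L x k2 k0 k3)))) 0 = -(pd k1 (pd k4 (pd t (pd t (fun x => L x k0 k2 k3)))) 0) := by rw [hT23 k1 t k4 t k2 k0 k3, hTA k1 k4 t t k2 k0 k3]
    have ce79 : pd k1 (pd t (pd k3 (pd k4 (fun x => L x k2 k0 t)))) 0 = -(pd k1 (pd k3 (pd k4 (pd t (fun x => L x k0 k2 t)))) 0) := by rw [hT23 k1 t k3 k4 k2 k0 t, hT34 k1 k3 t k4 k2 k0 t, hTA k1 k3 k4 t k2 k0 t]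
    have ce80 : pd k1 (pd t (pd k3 (pd t (fun x => L x k2 k0 k4)))) 0 = -(pd k1 (pd k3 (pd t (pd t (fun x => L x k0 k2 k4)))) 0) := by rw [hT23 k1 t k3 t k2 k0 k4, hTA k1 k3 t t k2 k0 k4]
    have ce81 : pd k0 (pd t (pd t (pd k4 (fun x => L x k2 k1 k3)))) 0 = -(pd k0 (pd k4 (pd t (pd t (fun x => L x k1 k2 k3)))) 0) := by rw [hT34 k0 t t k4 k2 k1 k3, hT23 k0 t k4 t k2 k1 k3, hTA k0 k4 t t k2 k1 k3]
    have ce82 : pd k0 (pd t (pd t (pd k3 (fun x => L x k2 k1 k4)))) 0 = -(pd k0 (pd k3 (pd t (pd t (fun x => L x k1 k2 k4)))) 0) := by rw [hT34 k0 t t k3 k2 k1 k4, hT23 k0 t k3 t k2 k1 k4, hTA k0 k3 t t k2 k1 k4]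
    have ce83 : pd k0 (pd t (pd k4 (pd k3 (fun x => L x k2 k1 t)))) 0 = -(pd k0 (pd k3 (pd k4 (pd t (fun x => L x k1 k2 t)))) 0) := by rw [hT23 k0 t k4 k3 k2 k1 t, hT34 k0 k4 t k3 k2 k1 t, hT23 k0 k4 k3 t k2 k1 t, hTA k0 k3 k4 t k2 k1 t]
    have ce84 : pd k0 (pd t (pd k4 (pd t (fun x => L x k2 k1 k3)))) 0 = -(pd k0 (pd k4 (pd t (pd t (fun x => L x k1 k2 k3)))) 0) := by rw [hT23 k0 t k4 t k2 k1 k3, hTA k0 k4 t t k2 k1 k3]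
    have ce85 : pd k0 (pd t (pd k3 (pd k4 (fun x => L x k2 k1 t)))) 0 = -(pd k0 (pd k3 (pd k4 (pd t (fun x => L x k1 k2 t)))) 0) := by rw [hT23 k0 t k3 k4 k2 k1 t, hT34 k0 k3 t k4 k2 k1 t, hTA k0 k3 k4 t k2 k1 t]
    have ce86 : pd k0 (pd t (pd k3 (pd t (fun x => L x k2 k1 k4)))) 0 = -(pd k0 (pd k3 (pd t (pd t (fun x => L x k1 k2 k4)))) 0) := by rw [hT23 k0 t k3 t k2 k1 k4, hTA k0 k3 t t k2 k1 k4]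
    simp only [ce0, ce1, ce2, ce3, ce4, ce5, ce6, ce7, ce8, ce9, ce10, ce11, ce12, ce13, ce14, ce15, ce16, ce17, ce18, ce19, ce20, ce21, ce22, ce23, ce24, ce25, ce26, ce27, ce28, ce29, ce30, ce31, ce32, ce33, ce34, ce35, ce36, ce37, ce38, ce39, ce40, ce41, ce42, ce43, ce44, ce45, ce46, ce47, ce48, ce49, ce50, ce51, ce52, ce53, ce54, ce55, ce56, ce57, ce58, ce59, ce60, ce61, ce62, ce63, ce64, ce65, ce66, ce67, ce68, ce69, ce70, ce71, ce72, ce73, ce74, ce75, ce76, ce77, ce78, ce79, ce80, ce81, ce82, ce83, ce84, ce85, ce86]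
    ring
  have keyW : (((∑ i, η i * pd k2 (pd i (pd i (fun x => LanAux.KK k0 k1 k3 k4 k0 k1 k3 k4 * (x k2) ^ 3))) 0) + (∑ i, η i * pd k2 (pd i (pd k4 (fun x => LanAux.KK k0 k1 k3 k4 k0 k1 i k3 * (x k2) ^ 3))) 0) - (∑ i, η i * pd k2 (pd i (pd k3 (fun x => LanAux.KK k0 k1 k3 k4 k0 k1 i k4 * (x k2) ^ 3))) 0))
      - ((∑ i, η i * pd k1 (pd i (pd i (fun x => LanAux.KK k0 k1 k3 k4 k0 k2 k3 k4 * (x k2) ^ 3))) 0) + (∑ i, η i * pd k1 (pd i (pd k4 (fun x => LanAux.KK k0 k1 k3 k4 k0 k2 i k3 * (x k2) ^ 3))) 0) - (∑ i, η i * pd k1 (pd i (pd k3 (fun x => LanAux.KK k0 k1 k3 k4 k0 k2 i k4 * (x k2) ^ 3))) 0))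
      - ((∑ i, η i * pd k2 (pd i (pd i (fun x => LanAux.KK k0 k1 k3 k4 k1 k0 k3 k4 * (x k2) ^ 3))) 0) + (∑ i, η i * pd k2 (pd i (pd k4 (fun x => LanAux.KK k0 k1 k3 k4 k1 k0 i k3 * (x k2) ^ 3))) 0) - (∑ i, η i * pd k2 (pd i (pd k3 (fun x => LanAux.KK k0 k1 k3 k4 k1 k0 i k4 * (x k2) ^ 3))) 0))
      + ((∑ i, η i * pd k0 (pd i (pd i (fun x => LanAux.KK k0 k1 k3 k4 k1 k2 k3 k4 * (x k2) ^ 3))) 0) + (∑ i, η i * pd k0 (pd i (pd k4 (fun x => LanAux.KK k0 k1 k3 k4 k1 k2 i k3 * (x k2) ^ 3))) 0) - (∑ i, η i * pd k0 (pd i (pd k3 (fun x => LanAux.KK k0 k1 k3 k4 k1 k2 i k4 * (x k2) ^ 3))) 0))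
      + ((∑ i, η i * pd k1 (pd i (pd i (fun x => LanAux.KK k0 k1 k3 k4 k2 k0 k3 k4 * (x k2) ^ 3))) 0) + (∑ i, η i * pd k1 (pd i (pd k4 (fun x => LanAux.KK k0 k1 k3 k4 k2 k0 i k3 * (x k2) ^ 3))) 0) - (∑ i, η i * pd k1 (pd i (pd k3 (fun x => LanAux.KK k0 k1 k3 k4 k2 k0 i k4 * (x k2) ^ 3))) 0))
      - ((∑ i, η i * pd k0 (pd i (pd i (fun x => LanAux.KK k0 k1 k3 k4 k2 k1 k3 k4 * (x k2) ^ 3))) 0) + (∑ i, η i * pd k0 (pd i (pd k4 (fun x => LanAux.KK k0 k1 k3 k4 k2 k1 i k3 * (x k2) ^ 3))) 0) - (∑ i, η i * pd k0 (pd i (pd k3 (fun x => LanAux.KK k0 k1 k3 k4 k2 k1 i k4 * (x k2) ^ 3))) 0))) = 12 * η k2 := by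
    have w0 : (∑ i, η i * pd k2 (pd i (pd i (fun x => LanAux.KK k0 k1 k3 k4 k0 k1 k3 k4 * (x k2) ^ 3))) 0) = η k2 * (LanAux.KK k0 k1 k3 k4 k0 k1 k3 k4 * 6) := by
      have hs : ∀ i : Fin n, η i * pd k2 (pd i (pd i (fun x => LanAux.KK k0 k1 k3 k4 k0 k1 k3 k4 * (x k2) ^ 3))) 0
          = (if k2 = i then η i * (LanAux.KK k0 k1 k3 k4 k0 k1 k3 k4 * 6) else 0) := by
        intro i
        rw [LanAux.pd3_cube (LanAux.KK k0 k1 k3 k4 k0 k1 k3 k4) k2 k2 i i]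
        by_cases h : k2 = i <;> simp [h]
      rw [Finset.sum_congr rfl (fun i _ => hs i), Finset.sum_ite_eq]
      simp
    have w1 : (∑ i, η i * pd k2 (pd i (pd k4 (fun x => LanAux.KK k0 k1 k3 k4 k0 k1 i k3 * (x k2) ^ 3))) 0) = 0 := by
      refine Finset.sum_eq_zero fun i _ => ?_
      rw [LanAux.pd3_cube (LanAux.KK k0 k1 k3 k4 k0 k1 i k3) k2 k2 i k4, if_neg ne24]
      ring
    have w2 : (∑ i, η i * pd k2 (pd i (pd k3 (fun x => LanAux.KK k0 k1 k3 k4 k0 k1 i k4 * (x k2) ^ 3))) 0) = 0 := by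
      refine Finset.sum_eq_zero fun i _ => ?_
      rw [LanAux.pd3_cube (LanAux.KK k0 k1 k3 k4 k0 k1 i k4) k2 k2 i k3, if_neg ne23]
      ring
    have w3 : (∑ i, η i * pd k1 (pd i (pd i (fun x => LanAux.KK k0 k1 k3 k4 k0 k2 k3 k4 * (x k2) ^ 3))) 0) = 0 := by
      refine Finset.sum_eq_zero fun i _ => ?_
      rw [LanAux.pd3_cube (LanAux.KK k0 k1 k3 k4 k0 k2 k3 k4) k2 k1 i i, if_neg ne21]
      ring
    have w4 : (∑ i, η i * pd k1 (pd i (pd k4 (fun x => LanAux.KK k0 k1 k3 k4 k0 k2 i k3 * (x k2) ^ 3))) 0) = 0 := by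
      refine Finset.sum_eq_zero fun i _ => ?_
      rw [LanAux.pd3_cube (LanAux.KK k0 k1 k3 k4 k0 k2 i k3) k2 k1 i k4, if_neg ne24]
      ring
    have w5 : (∑ i, η i * pd k1 (pd i (pd k3 (fun x => LanAux.KK k0 k1 k3 k4 k0 k2 i k4 * (x k2) ^ 3))) 0) = 0 := by
      refine Finset.sum_eq_zero fun i _ => ?_
      rw [LanAux.pd3_cube (LanAux.KK k0 k1 k3 k4 k0 k2 i k4) k2 k1 i k3, if_neg ne23]
      ring
    have w6 : (∑ i, η i * pd k2 (pd i (pd i (fun x => LanAux.KK k0 k1 k3 k4 k1 k0 k3 k4 * (x k2) ^ 3))) 0) = η k2 * (LanAux.KK k0 k1 k3 k4 k1 k0 k3 k4 * 6) := by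
      have hs : ∀ i : Fin n, η i * pd k2 (pd i (pd i (fun x => LanAux.KK k0 k1 k3 k4 k1 k0 k3 k4 * (x k2) ^ 3))) 0
          = (if k2 = i then η i * (LanAux.KK k0 k1 k3 k4 k1 k0 k3 k4 * 6) else 0) := by
        intro i
        rw [LanAux.pd3_cube (LanAux.KK k0 k1 k3 k4 k1 k0 k3 k4) k2 k2 i i]
        by_cases h : k2 = i <;> simp [h]
      rw [Finset.sum_congr rfl (fun i _ => hs i), Finset.sum_ite_eq]
      simp
    have w7 : (∑ i, η i * pd k2 (pd i (pd k4 (fun x => LanAux.KK k0 k1 k3 k4 k1 k0 i k3 * (x k2) ^ 3))) 0) = 0 := by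
      refine Finset.sum_eq_zero fun i _ => ?_
      rw [LanAux.pd3_cube (LanAux.KK k0 k1 k3 k4 k1 k0 i k3) k2 k2 i k4, if_neg ne24]
      ring
    have w8 : (∑ i, η i * pd k2 (pd i (pd k3 (fun x => LanAux.KK k0 k1 k3 k4 k1 k0 i k4 * (x k2) ^ 3))) 0) = 0 := by
      refine Finset.sum_eq_zero fun i _ => ?_
      rw [LanAux.pd3_cube (LanAux.KK k0 k1 k3 k4 k1 k0 i k4) k2 k2 i k3, if_neg ne23]
      ring
    have w9 : (∑ i, η i * pd k0 (pd i (pd i (fun x => LanAux.KK k0 k1 k3 k4 k1 k2 k3 k4 * (x k2) ^ 3))) 0) = 0 := by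
      refine Finset.sum_eq_zero fun i _ => ?_
      rw [LanAux.pd3_cube (LanAux.KK k0 k1 k3 k4 k1 k2 k3 k4) k2 k0 i i, if_neg ne20]
      ring
    have w10 : (∑ i, η i * pd k0 (pd i (pd k4 (fun x => LanAux.KK k0 k1 k3 k4 k1 k2 i k3 * (x k2) ^ 3))) 0) = 0 := by
      refine Finset.sum_eq_zero fun i _ => ?_
      rw [LanAux.pd3_cube (LanAux.KK k0 k1 k3 k4 k1 k2 i k3) k2 k0 i k4, if_neg ne24]
      ring
    have w11 : (∑ i, η i * pd k0 (pd i (pd k3 (fun x => LanAux.KK k0 k1 k3 k4 k1 k2 i k4 * (x k2) ^ 3))) 0) = 0 := by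
      refine Finset.sum_eq_zero fun i _ => ?_
      rw [LanAux.pd3_cube (LanAux.KK k0 k1 k3 k4 k1 k2 i k4) k2 k0 i k3, if_neg ne23]
      ring
    have w12 : (∑ i, η i * pd k1 (pd i (pd i (fun x => LanAux.KK k0 k1 k3 k4 k2 k0 k3 k4 * (x k2) ^ 3))) 0) = 0 := by
      refine Finset.sum_eq_zero fun i _ => ?_
      rw [LanAux.pd3_cube (LanAux.KK k0 k1 k3 k4 k2 k0 k3 k4) k2 k1 i i, if_neg ne21]
      ring
    have w13 : (∑ i, η i * pd k1 (pd i (pd k4 (fun x => LanAux.KK k0 k1 k3 k4 k2 k0 i k3 * (x k2) ^ 3))) 0) = 0 := by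
      refine Finset.sum_eq_zero fun i _ => ?_
      rw [LanAux.pd3_cube (LanAux.KK k0 k1 k3 k4 k2 k0 i k3) k2 k1 i k4, if_neg ne24]
      ring
    have w14 : (∑ i, η i * pd k1 (pd i (pd k3 (fun x => LanAux.KK k0 k1 k3 k4 k2 k0 i k4 * (x k2) ^ 3))) 0) = 0 := by
      refine Finset.sum_eq_zero fun i _ => ?_
      rw [LanAux.pd3_cube (LanAux.KK k0 k1 k3 k4 k2 k0 i k4) k2 k1 i k3, if_neg ne23]
      ring
    have w15 : (∑ i, η i * pd k0 (pd i (pd i (fun x => LanAux.KK k0 k1 k3 k4 k2 k1 k3 k4 * (x k2) ^ 3))) 0) = 0 := by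
      refine Finset.sum_eq_zero fun i _ => ?_
      rw [LanAux.pd3_cube (LanAux.KK k0 k1 k3 k4 k2 k1 k3 k4) k2 k0 i i, if_neg ne20]
      ring
    have w16 : (∑ i, η i * pd k0 (pd i (pd k4 (fun x => LanAux.KK k0 k1 k3 k4 k2 k1 i k3 * (x k2) ^ 3))) 0) = 0 := by
      refine Finset.sum_eq_zero fun i _ => ?_
      rw [LanAux.pd3_cube (LanAux.KK k0 k1 k3 k4 k2 k1 i k3) k2 k0 i k4, if_neg ne24]
      ring
    have w17 : (∑ i, η i * pd k0 (pd i (pd k3 (fun x => LanAux.KK k0 k1 k3 k4 k2 k1 i k4 * (x k2) ^ 3))) 0) = 0 := by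
      refine Finset.sum_eq_zero fun i _ => ?_
      rw [LanAux.pd3_cube (LanAux.KK k0 k1 k3 k4 k2 k1 i k4) k2 k0 i k3, if_neg ne23]
      ring
    have kv1 : LanAux.KK k0 k1 k3 k4 k0 k1 k3 k4 = 1 := by
      simp [LanAux.KK, LanAux.eE, LanAux.dl, ne01, ne10, ne03, ne30, ne04, ne40,
        ne13, ne31, ne14, ne41, ne34, ne43]
    have kv2 : LanAux.KK k0 k1 k3 k4 k1 k0 k3 k4 = -1 := by
      simp [LanAux.KK, LanAux.eE, LanAux.dl, ne01, ne10, ne03, ne30, ne04, ne40,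
        ne13, ne31, ne14, ne41, ne34, ne43]
    rw [w0, w1, w2, w3, w4, w5, w6, w7, w8, w9, w10, w11, w12, w13, w14, w15, w16, w17, kv1, kv2]
    ring
  rw [keyW] at main
  rcases hη k2 with h | h <;> rw [h] at main <;> norm_num at main
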